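/- arXiv:2105.09200 — 7 statements merged into one kernel-verified Lean document; each statement's English description precedes it below -/
import Mathlib

section
/- Let A be a real symmetric invertible matrix with 3×3 block structure A = [[A_pp, A_qpᵀ, 0], [A_qp, A_qq, A_rqᵀ], [0, A_rq, A_rr]] (square diagonal blocks of sizes |p|, |q|, |r|), and suppose the block A_pp is invertible. Let G = A⁻¹ and let A₁ = [[A_qq − A_qp A_pp⁻¹ A_qpᵀ, A_rqᵀ], [A_rq, A_rr]] be the Schur complement of A_pp in A. Then A₁ is invertible, and with G₁ = A₁⁻¹ the leading diagonal block of G satisfies G_pp = A_pp⁻¹ + [−A_pp⁻¹A_qpᵀ, 0] · G₁ · [−A_pp⁻¹A_qpᵀ, 0]ᵀ, where [−A_pp⁻¹A_qpᵀ, 0] denotes the |p|×(|q|+|r|) block row whose q-block is −A_pp⁻¹A_qpᵀ and whose r-block is zero. -/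
open Matrix

/-- Lemma 1 (selected inversion): for a symmetric invertible block matrix
`A = [[App, Aqpᵀ, 0], [Aqp, Aqq, Arqᵀ], [0, Arq, Arr]]` with `App` invertible,
the Schur complement `A₁` of `App` is invertible and
`G_pp = App⁻¹ + [-App⁻¹Aqpᵀ, 0] A₁⁻¹ [-App⁻¹Aqpᵀ, 0]ᵀ`. -/
theorem stmt_0 (np nq nr : ℕ)
    (App : Matrix (Fin np) (Fin np) ℝ)
    (Aqp : Matrix (Fin nq) (Fin np) ℝ)
    (Aqq : Matrix (Fin nq) (Fin nq) ℝ)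
    (Arq : Matrix (Fin nr) (Fin nq) ℝ)
    (Arr : Matrix (Fin nr) (Fin nr) ℝ)
    (A : Matrix (Fin np ⊕ (Fin nq ⊕ Fin nr)) (Fin np ⊕ (Fin nq ⊕ Fin nr)) ℝ)
    (hA : A = fromBlocks App (fromCols Aqpᵀ (0 : Matrix (Fin np) (Fin nr) ℝ))
        (fromRows Aqp (0 : Matrix (Fin nr) (Fin np) ℝ))
        (fromBlocks Aqq Arqᵀ Arq Arr))
    (hsymm : A.IsSymm) (hAunit : IsUnit A) (hAppunit : IsUnit App)
    (A₁ : Matrix (Fin nq ⊕ Fin nr) (Fin nq ⊕ Fin nr) ℝ)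
    (hA₁ : A₁ = fromBlocks (Aqq - Aqp * App⁻¹ * Aqpᵀ) Arqᵀ Arq Arr) :
    IsUnit A₁ ∧
      (A⁻¹).toBlocks₁₁ =
        App⁻¹ +
          (fromCols (-(App⁻¹ * Aqpᵀ)) (0 : Matrix (Fin np) (Fin nr) ℝ)) * A₁⁻¹ *
            (fromCols (-(App⁻¹ * Aqpᵀ)) (0 : Matrix (Fin np) (Fin nr) ℝ))ᵀ := by
  letI iApp : Invertible App := hAppunit.invertible
  set B := fromCols Aqpᵀ (0 : Matrix (Fin np) (Fin nr) ℝ) with hB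
  set C := fromRows Aqp (0 : Matrix (Fin nr) (Fin np) ℝ) with hC
  set D := fromBlocks Aqq Arqᵀ Arq Arr with hD
  have hInvApp : ⅟App = App⁻¹ := invOf_eq_nonsing_inv App
  -- App is symmetric
  have hAppT : Appᵀ = App := by
    have h1 : (fromBlocks App B C D)ᵀ = fromBlocks App B C D := by
      rw [← hA]; exact hsymm.eq
    rw [fromBlocks_transpose] at h1
    have h2 := congrArg Matrix.toBlocks₁₁ h1
    simpa using h2
  have hInvAppT : (⅟App)ᵀ = ⅟App := by
    rw [hInvApp, Matrix.transpose_nonsing_inv, hAppT]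
  -- A₁ is the Schur complement
  have hCB : C * ⅟App * B = fromBlocks (Aqp * App⁻¹ * Aqpᵀ) 0 0 0 := by
    rw [hB, hC, hInvApp, Matrix.fromRows_mul, Matrix.fromRows_mul_fromCols]
    simp
  have hS : A₁ = D - C * ⅟App * B := by
    rw [hA₁, hCB, hD]
    ext (i | i) (j | j) <;>
      simp [Matrix.sub_apply, fromBlocks_apply₁₁, fromBlocks_apply₁₂,
        fromBlocks_apply₂₁, fromBlocks_apply₂₂]
  letI iA : Invertible A := hAunit.invertible
  letI iA' : Invertible (fromBlocks App B C D) := iA.copy _ hA.symm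
  letI iS : Invertible (D - C * ⅟App * B) :=
    Matrix.invertibleOfFromBlocks₁₁Invertible App B C D
  letI iA₁ : Invertible A₁ := iS.copy A₁ hS
  refine ⟨isUnit_of_invertible A₁, ?_⟩
  have hA₁inv : A₁⁻¹ = ⅟(D - C * ⅟App * B) := by
    rw [hS, ← invOf_eq_nonsing_inv]
  have hG : A⁻¹ = fromBlocks
      (⅟App + ⅟App * B * ⅟(D - C * ⅟App * B) * C * ⅟App)
      (-(⅟App * B * ⅟(D - C * ⅟App * B)))
      (-(⅟(D - C * ⅟App * B) * C * ⅟App))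
      (⅟(D - C * ⅟App * B)) := by
    rw [hA, ← invOf_eq_nonsing_inv]
    exact Matrix.invOf_fromBlocks₁₁_eq App B C D
  have hcol : fromCols (-(App⁻¹ * Aqpᵀ)) (0 : Matrix (Fin np) (Fin nr) ℝ)
      = -(⅟App * B) := by
    rw [hB, Matrix.mul_fromCols, Matrix.fromCols_neg, hInvApp]
    simp
  have hcolT : (-(⅟App * B))ᵀ = -(C * ⅟App) := by
    rw [Matrix.transpose_neg, Matrix.transpose_mul, hInvAppT, hB,
      Matrix.transpose_fromCols, hC]
    simp
  rw [hG, hcol, hcolT, hA₁inv, Matrix.toBlocks_fromBlocks₁₁, ← hInvApp]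
  simp only [Matrix.neg_mul, Matrix.mul_neg, neg_neg, Matrix.mul_assoc]
end

section
/- Let A be a real symmetric invertible matrix with 3×3 block structure A = [[A_pp, A_qpᵀ, 0], [A_qp, A_qq, A_rqᵀ], [0, A_rq, A_rr]], with A_pp invertible, let G = A⁻¹, let A₁ = [[A_qq − A_qp A_pp⁻¹ A_qpᵀ, A_rqᵀ], [A_rq, A_rr]] be the Schur complement of A_pp, and let G₁ = A₁⁻¹. Then G_pp depends only on the qq-block of G₁; explicitly, G_pp = A_pp⁻¹ + (A_pp⁻¹A_qpᵀ) (G₁)_qq (A_qp A_pp⁻¹), where (G₁)_qq is the |q|×|q| leading diagonal block of G₁. -/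
open Matrix

/-- For a symmetric invertible block matrix
`A = [[App, Aqpᵀ, 0], [Aqp, Aqq, Arqᵀ], [0, Arq, Arr]]` with `App` invertible,
letting `A₁` be the Schur complement of `App` and `G₁ = A₁⁻¹`, the block `G_pp` of `G = A⁻¹`
is given by `G_pp = App⁻¹ + (App⁻¹Aqpᵀ) (G₁)_qq (Aqp App⁻¹)`. -/
theorem stmt_1 (np nq nr : ℕ)
    (App : Matrix (Fin np) (Fin np) ℝ)
    (Aqp : Matrix (Fin nq) (Fin np) ℝ)
    (Aqq : Matrix (Fin nq) (Fin nq) ℝ)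
    (Arq : Matrix (Fin nr) (Fin nq) ℝ)
    (Arr : Matrix (Fin nr) (Fin nr) ℝ)
    (A : Matrix (Fin np ⊕ (Fin nq ⊕ Fin nr)) (Fin np ⊕ (Fin nq ⊕ Fin nr)) ℝ)
    (hA : A = fromBlocks App (fromCols Aqpᵀ (0 : Matrix (Fin np) (Fin nr) ℝ))
        (fromRows Aqp (0 : Matrix (Fin nr) (Fin np) ℝ))
        (fromBlocks Aqq Arqᵀ Arq Arr))
    (hsymm : A.IsSymm) (hAunit : IsUnit A) (hAppunit : IsUnit App)
    (A₁ : Matrix (Fin nq ⊕ Fin nr) (Fin nq ⊕ Fin nr) ℝ)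
    (hA₁ : A₁ = fromBlocks (Aqq - Aqp * App⁻¹ * Aqpᵀ) Arqᵀ Arq Arr)
    (G₁ : Matrix (Fin nq ⊕ Fin nr) (Fin nq ⊕ Fin nr) ℝ)
    (hG₁ : G₁ = A₁⁻¹) :
    (A⁻¹).toBlocks₁₁ =
      App⁻¹ + (App⁻¹ * Aqpᵀ) * G₁.toBlocks₁₁ * (Aqp * App⁻¹) := by
  haveI := hAppunit.invertible
  set B := fromCols Aqpᵀ (0 : Matrix (Fin np) (Fin nr) ℝ) with hB
  set C := fromRows Aqp (0 : Matrix (Fin nr) (Fin np) ℝ) with hC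
  set D := fromBlocks Aqq Arqᵀ Arq Arr with hD
  haveI iA : Invertible (fromBlocks App B C D) := (hA ▸ hAunit).invertible
  have hSchur : D - C * ⅟App * B = A₁ := by
    rw [hA₁, hB, hC, hD, fromRows_mul, fromRows_mul_fromCols]
    simp [invOf_eq_nonsing_inv]
    ext (i | i) (j | j) <;> simp [fromBlocks]
  haveI iS : Invertible (D - C * ⅟App * B) := invertibleOfFromBlocks₁₁Invertible App B C D
  have hinv : A⁻¹ = ⅟(fromBlocks App B C D) := by
    rw [hA, ← invOf_eq_nonsing_inv]
  rw [hinv, invOf_fromBlocks₁₁_eq, toBlocks_fromBlocks₁₁]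
  have hG : ⅟(D - C * ⅟App * B) = G₁ := by
    rw [hG₁, ← hSchur, invOf_eq_nonsing_inv]
  rw [hG]
  have hBG : B * G₁ = fromCols (Aqpᵀ * G₁.toBlocks₁₁) (Aqpᵀ * G₁.toBlocks₁₂) := by
    rw [hB, ← fromBlocks_toBlocks G₁, fromCols_mul_fromBlocks]
    simp
  have : ⅟App * B * G₁ * C * ⅟App
      = App⁻¹ * Aqpᵀ * G₁.toBlocks₁₁ * (Aqp * App⁻¹) := by
    rw [Matrix.mul_assoc (⅟App) B G₁, hBG, hC, invOf_eq_nonsing_inv]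
    rw [Matrix.mul_assoc _ _ (fromRows Aqp 0), fromCols_mul_fromRows]
    simp [Matrix.mul_assoc]
  rw [invOf_eq_nonsing_inv] at this ⊢
  rw [this]
end

section
/- Let A be a real symmetric invertible matrix in 3×3 block form A = [[A_p̌p̌, A_p̂p̌ᵀ, A_qp̌ᵀ], [A_p̂p̌, A_p̂p̂, A_qp̂ᵀ], [A_qp̌, A_qp̂, A_qq]], suppose there is a real |p̂|×|p̌| matrix T_p with A_qp̌ = A_qp̂ T_p, let Q_p = [[I, 0, 0], [−T_p, I, 0], [0, 0, I]], and set Ā = Q_pᵀ A Q_p. Let G = A⁻¹ and Ḡ = Ā⁻¹. Then the (p̌, p̌) diagonal blocks of G and Ḡ coincide: G_p̌p̌ = Ḡ_p̌p̌. -/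
open Matrix

/-- For a symmetric invertible matrix `A` in 3×3 block form with `A_qp̌ = A_qp̂ T_p`,
setting `Ā = Q_pᵀ A Q_p` with `Q_p = [[I,0,0],[-T_p,I,0],[0,0,I]]`, the leading
`(p̌, p̌)` diagonal blocks of `G = A⁻¹` and `Ḡ = Ā⁻¹` coincide. -/
theorem stmt_5 (a b c : ℕ)
    (A11 : Matrix (Fin a) (Fin a) ℝ)
    (A21 : Matrix (Fin b) (Fin a) ℝ)
    (A22 : Matrix (Fin b) (Fin b) ℝ)
    (A31 : Matrix (Fin c) (Fin a) ℝ)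
    (A32 : Matrix (Fin c) (Fin b) ℝ)
    (A33 : Matrix (Fin c) (Fin c) ℝ)
    (A : Matrix ((Fin a ⊕ Fin b) ⊕ Fin c) ((Fin a ⊕ Fin b) ⊕ Fin c) ℝ)
    (hA : A = fromBlocks (fromBlocks A11 A21ᵀ A21 A22) (fromRows A31ᵀ A32ᵀ)
        (fromCols A31 A32) A33)
    (hsymm : A.IsSymm) (hAunit : IsUnit A)
    (Tp : Matrix (Fin b) (Fin a) ℝ)
    (hTp : A31 = A32 * Tp)
    (Qp : Matrix ((Fin a ⊕ Fin b) ⊕ Fin c) ((Fin a ⊕ Fin b) ⊕ Fin c) ℝ)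
    (hQp : Qp = fromBlocks
        (fromBlocks (1 : Matrix (Fin a) (Fin a) ℝ) 0 (-Tp) (1 : Matrix (Fin b) (Fin b) ℝ))
        0 0 (1 : Matrix (Fin c) (Fin c) ℝ))
    (Abar : Matrix ((Fin a ⊕ Fin b) ⊕ Fin c) ((Fin a ⊕ Fin b) ⊕ Fin c) ℝ)
    (hAbar : Abar = Qpᵀ * A * Qp) :
    ((A⁻¹).toBlocks₁₁).toBlocks₁₁ = ((Abar⁻¹).toBlocks₁₁).toBlocks₁₁ := by
  set S : Matrix ((Fin a ⊕ Fin b) ⊕ Fin c) ((Fin a ⊕ Fin b) ⊕ Fin c) ℝ :=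
    fromBlocks (fromBlocks 1 0 Tp 1) 0 0 1 with hS
  have hdet : IsUnit A.det := (Matrix.isUnit_iff_isUnit_det A).mp hAunit
  have hAAinv : A * A⁻¹ = 1 := Matrix.mul_nonsing_inv A hdet
  have hSQ : S * Qp = 1 := by
    rw [hS, hQp]
    simp [Matrix.fromBlocks_multiply, ← Matrix.fromBlocks_one]
  have hQS : Qp * S = 1 := by
    rw [hS, hQp]
    simp [Matrix.fromBlocks_multiply, ← Matrix.fromBlocks_one]
  have hinv : Abar⁻¹ = S * A⁻¹ * Sᵀ := by
    apply Matrix.inv_eq_right_inv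
    rw [hAbar]
    calc Qpᵀ * A * Qp * (S * A⁻¹ * Sᵀ)
        = Qpᵀ * (A * ((Qp * S) * A⁻¹)) * Sᵀ := by
          simp only [Matrix.mul_assoc]
      _ = Qpᵀ * Sᵀ := by rw [hQS, Matrix.one_mul, hAAinv, Matrix.mul_one]
      _ = (S * Qp)ᵀ := by rw [Matrix.transpose_mul]
      _ = 1 := by rw [hSQ, Matrix.transpose_one]
  have hG : A⁻¹ = fromBlocks (A⁻¹.toBlocks₁₁) (A⁻¹.toBlocks₁₂)
      (A⁻¹.toBlocks₂₁) (A⁻¹.toBlocks₂₂) := (Matrix.fromBlocks_toBlocks _).symm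
  have hG11 : A⁻¹.toBlocks₁₁ = fromBlocks (A⁻¹.toBlocks₁₁.toBlocks₁₁)
      (A⁻¹.toBlocks₁₁.toBlocks₁₂) (A⁻¹.toBlocks₁₁.toBlocks₂₁)
      (A⁻¹.toBlocks₁₁.toBlocks₂₂) := (Matrix.fromBlocks_toBlocks _).symm
  rw [hinv, hS]
  conv_rhs => rw [hG]
  simp only [Matrix.fromBlocks_transpose, Matrix.fromBlocks_multiply,
    Matrix.toBlocks_fromBlocks₁₁, Matrix.zero_mul, Matrix.mul_zero,
    add_zero, zero_add]
  conv_rhs => rw [hG11]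
  simp [Matrix.fromBlocks_transpose, Matrix.fromBlocks_multiply,
    Matrix.toBlocks_fromBlocks₁₁]
end

section
/- Let A be a real symmetric invertible matrix in 3×3 block form A = [[A_p̌p̌, A_p̂p̌ᵀ, A_qp̌ᵀ], [A_p̂p̌, A_p̂p̂, A_qp̂ᵀ], [A_qp̌, A_qp̂, A_qq]], suppose there is a real |p̂|×|p̌| matrix T_p with A_qp̌ = A_qp̂ T_p, and set B_p̌p̌ = A_p̌p̌ − T_pᵀ A_p̂p̌ − A_p̂p̌ᵀ T_p + T_pᵀ A_p̂p̂ T_p and B_p̂p̌ = A_p̂p̌ − A_p̂p̂ T_p. Assume B_p̌p̌ is invertible, let Ā₁ = [[A_p̂p̂ − B_p̂p̌ B_p̌p̌⁻¹ B_p̂p̌ᵀ, A_qp̂ᵀ], [A_qp̂, A_qq]], assume Ā₁ is invertible, and let Ḡ₁ = Ā₁⁻¹ and G = A⁻¹. Then G_p̌p̌ = B_p̌p̌⁻¹ + [−B_p̌p̌⁻¹B_p̂p̌ᵀ, 0] · Ḡ₁ · [−B_p̌p̌⁻¹B_p̂p̌ᵀ, 0]ᵀ, where [−B_p̌p̌⁻¹B_p̂p̌ᵀ,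 0] is the |p̌|×(|p̂|+|q|) block row whose p̂-block is −B_p̌p̌⁻¹B_p̂p̌ᵀ and whose q-block is zero. -/
open Matrix

lemma myFromColumns_add {R m n₁ n₂ : Type*} [Add R] (A₁ B₁ : Matrix m n₁ R) (A₂ B₂ : Matrix m n₂ R) :
    fromCols A₁ A₂ + fromCols B₁ B₂ = fromCols (A₁ + B₁) (A₂ + B₂) := by
  ext i (j | j) <;> simp

lemma myFromRows_add {R m₁ m₂ n : Type*} [Add R] (A₁ B₁ : Matrix m₁ n R) (A₂ B₂ : Matrix m₂ n R) :
    fromRows A₁ A₂ + fromRows B₁ B₂ = fromRows (A₁ + B₁) (A₂ + B₂) := by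
  ext (i | i) j <;> simp

lemma myFromBlocks_sub {R l m n o : Type*} [Sub R] (A E : Matrix n l R) (B F : Matrix n m R)
    (C G : Matrix o l R) (D H : Matrix o m R) :
    fromBlocks A B C D - fromBlocks E F G H = fromBlocks (A - E) (B - F) (C - G) (D - H) := by
  ext (i | i) (j | j) <;> simp [fromBlocks]

/-- Block inversion with skeletonization: for a symmetric invertible `A` in 3×3 block
form with `A_qp̌ = A_qp̂ T_p`, if `B_p̌p̌` and the skeletonized Schur complement `Ā₁`
are invertible, then with `Ḡ₁ = Ā₁⁻¹`,
`G_p̌p̌ = B_p̌p̌⁻¹ + [-B_p̌p̌⁻¹B_p̂p̌ᵀ, 0] Ḡ₁ [-B_p̌p̌⁻¹B_p̂p̌ᵀ, 0]ᵀ`. -/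
theorem stmt_6 (a b c : ℕ)
    (A11 : Matrix (Fin a) (Fin a) ℝ)
    (A21 : Matrix (Fin b) (Fin a) ℝ)
    (A22 : Matrix (Fin b) (Fin b) ℝ)
    (A31 : Matrix (Fin c) (Fin a) ℝ)
    (A32 : Matrix (Fin c) (Fin b) ℝ)
    (A33 : Matrix (Fin c) (Fin c) ℝ)
    (A : Matrix ((Fin a ⊕ Fin b) ⊕ Fin c) ((Fin a ⊕ Fin b) ⊕ Fin c) ℝ)
    (hA : A = fromBlocks (fromBlocks A11 A21ᵀ A21 A22) (fromRows A31ᵀ A32ᵀ)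
        (fromCols A31 A32) A33)
    (hsymm : A.IsSymm) (hAunit : IsUnit A)
    (Tp : Matrix (Fin b) (Fin a) ℝ)
    (hTp : A31 = A32 * Tp)
    (B11 : Matrix (Fin a) (Fin a) ℝ)
    (hB11 : B11 = A11 - Tpᵀ * A21 - A21ᵀ * Tp + Tpᵀ * A22 * Tp)
    (B21 : Matrix (Fin b) (Fin a) ℝ)
    (hB21 : B21 = A21 - A22 * Tp)
    (hB11unit : IsUnit B11)
    (Abar₁ : Matrix (Fin b ⊕ Fin c) (Fin b ⊕ Fin c) ℝ)
    (hAbar₁ : Abar₁ = fromBlocks (A22 - B21 * B11⁻¹ * B21ᵀ) A32ᵀ A32 A33)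
    (hAbar₁unit : IsUnit Abar₁)
    (Gbar₁ : Matrix (Fin b ⊕ Fin c) (Fin b ⊕ Fin c) ℝ)
    (hGbar₁ : Gbar₁ = Abar₁⁻¹) :
    ((A⁻¹).toBlocks₁₁).toBlocks₁₁ =
      B11⁻¹ +
        (fromCols (-(B11⁻¹ * B21ᵀ)) (0 : Matrix (Fin a) (Fin c) ℝ)) * Gbar₁ *
          (fromCols (-(B11⁻¹ * B21ᵀ)) (0 : Matrix (Fin a) (Fin c) ℝ))ᵀ := by
  -- symmetry of diagonal blocks
  have hs : Aᵀ = A := hsymm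
  rw [hA, fromBlocks_transpose, fromBlocks_transpose, fromBlocks_inj, fromBlocks_inj] at hs
  have hA11 : A11ᵀ = A11 := hs.1.1
  have hA22 : A22ᵀ = A22 := hs.1.2.2.2
  have hB11symm : B11ᵀ = B11 := by
    rw [hB11]; simp only [transpose_add, transpose_sub, transpose_mul, transpose_transpose,
      hA11, hA22, Matrix.mul_assoc]
    abel
  have hB11invsymm : B11⁻¹ᵀ = B11⁻¹ := by rw [transpose_nonsing_inv, hB11symm]
  -- 2x2 reorganized matrices
  set M : Matrix (Fin b ⊕ Fin c) (Fin b ⊕ Fin c) ℝ := fromBlocks A22 A32ᵀ A32 A33 with hM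
  set A' : Matrix (Fin a ⊕ (Fin b ⊕ Fin c)) (Fin a ⊕ (Fin b ⊕ Fin c)) ℝ :=
    fromBlocks A11 (fromCols A21ᵀ A31ᵀ) (fromRows A21 A31) M with hA'
  set A'' : Matrix (Fin a ⊕ (Fin b ⊕ Fin c)) (Fin a ⊕ (Fin b ⊕ Fin c)) ℝ :=
    fromBlocks B11 (fromCols B21ᵀ (0 : Matrix (Fin a) (Fin c) ℝ))
      (fromRows B21 (0 : Matrix (Fin c) (Fin a) ℝ)) M with hA''2
  set P : Matrix (Fin a ⊕ (Fin b ⊕ Fin c)) (Fin a ⊕ (Fin b ⊕ Fin c)) ℝ :=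
    fromBlocks 1 (fromCols Tpᵀ (0 : Matrix (Fin a) (Fin c) ℝ)) 0 1 with hP
  set Q : Matrix (Fin a ⊕ (Fin b ⊕ Fin c)) (Fin a ⊕ (Fin b ⊕ Fin c)) ℝ :=
    fromBlocks 1 0 (fromRows Tp (0 : Matrix (Fin c) (Fin a) ℝ)) 1 with hQ
  -- A is A' reindexed
  have hreidx : A = reindex (Equiv.sumAssoc (Fin a) (Fin b) (Fin c)).symm
      (Equiv.sumAssoc (Fin a) (Fin b) (Fin c)).symm A' := by
    rw [hA, hA', hM]
    ext i j
    rcases i with (i | i) | i <;> rcases j with (j | j) | j <;>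
      simp [Equiv.sumAssoc, fromBlocks, fromRows_apply_inl, fromRows_apply_inr, fromCols_apply_inl, fromCols_apply_inr]
  have hLHS : ((A⁻¹).toBlocks₁₁).toBlocks₁₁ = (A'⁻¹).toBlocks₁₁ := by
    rw [hreidx, inv_reindex]
    ext i j
    simp [toBlocks₁₁, Equiv.sumAssoc]
  -- the factorization A' = P * A'' * Q
  have hfact : A' = P * A'' * Q := by
    rw [hA', hA''2, hP, hQ, hTp, hB11, hB21, fromBlocks_multiply, fromBlocks_multiply]
    simp only [Matrix.one_mul, Matrix.mul_one, Matrix.mul_zero, Matrix.zero_mul, add_zero,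
      zero_add, fromCols_mul_fromRows, fromCols_mul_fromBlocks, fromBlocks_mul_fromRows,
      fromRows_mul, mul_fromCols, transpose_sub, transpose_mul, Matrix.sub_mul,
      Matrix.mul_sub, transpose_transpose, hA22, myFromColumns_add, myFromRows_add, hM]
    rw [fromBlocks_inj]
    refine ⟨?_, ?_, ?_, rfl⟩
    · simp only [Matrix.sub_mul, Matrix.add_mul, smul_mul_assoc, Matrix.mul_assoc]
      abel
    · rw [fromCols_ext_iff]; constructor <;> abel
    · rw [fromRows_ext_iff]; constructor <;> abel
  -- invertibility setup
  haveI iB11 : Invertible B11 := hB11unit.invertible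
  haveI iAbar : Invertible Abar₁ := hAbar₁unit.invertible
  have hSch : M - fromRows B21 (0 : Matrix (Fin c) (Fin a) ℝ) * ⅟B11 *
      fromCols B21ᵀ (0 : Matrix (Fin a) (Fin c) ℝ) = Abar₁ := by
    rw [invOf_eq_nonsing_inv, fromRows_mul, Matrix.zero_mul, fromRows_mul_fromCols,
      Matrix.mul_zero, Matrix.zero_mul, hM, hAbar₁, myFromBlocks_sub]
    simp
  haveI iSch : Invertible (M - fromRows B21 (0 : Matrix (Fin c) (Fin a) ℝ) * ⅟B11 *
      fromCols B21ᵀ (0 : Matrix (Fin a) (Fin c) ℝ)) := iAbar.copy _ hSch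
  haveI iA'' : Invertible A'' := by
    rw [hA''2]
    exact fromBlocks₁₁Invertible B11 _ _ M
  -- explicit inverse of A''
  have hG'' : A''⁻¹ = fromBlocks
      (B11⁻¹ + B11⁻¹ * fromCols B21ᵀ (0 : Matrix (Fin a) (Fin c) ℝ) * Gbar₁ *
        fromRows B21 (0 : Matrix (Fin c) (Fin a) ℝ) * B11⁻¹)
      (-(B11⁻¹ * fromCols B21ᵀ (0 : Matrix (Fin a) (Fin c) ℝ) * Gbar₁))
      (-(Gbar₁ * fromRows B21 (0 : Matrix (Fin c) (Fin a) ℝ) * B11⁻¹))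
      Gbar₁ := by
    have h := invOf_fromBlocks₁₁_eq B11 (fromCols B21ᵀ (0 : Matrix (Fin a) (Fin c) ℝ))
      (fromRows B21 (0 : Matrix (Fin c) (Fin a) ℝ)) M
    simp only [invOf_eq_nonsing_inv] at h hSch
    rw [← hA''2, hSch, ← hGbar₁] at h
    exact h
  -- inverses of P and Q
  have hPinv : P⁻¹ = fromBlocks 1 (-(fromCols Tpᵀ (0 : Matrix (Fin a) (Fin c) ℝ))) 0 1 := by
    apply inv_eq_right_inv
    rw [hP, fromBlocks_multiply]
    simp only [Matrix.one_mul, Matrix.mul_one, Matrix.mul_zero, Matrix.zero_mul, add_zero,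
      zero_add, neg_add_cancel, add_neg_cancel]
    exact fromBlocks_one
  have hQinv : Q⁻¹ = fromBlocks 1 0 (-(fromRows Tp (0 : Matrix (Fin c) (Fin a) ℝ))) 1 := by
    apply inv_eq_right_inv
    rw [hQ, fromBlocks_multiply]
    simp only [Matrix.one_mul, Matrix.mul_one, Matrix.mul_zero, Matrix.zero_mul, add_zero,
      zero_add, neg_add_cancel, add_neg_cancel]
    exact fromBlocks_one
  -- compute the top-left block of A'⁻¹
  rw [hLHS, hfact, Matrix.mul_inv_rev, Matrix.mul_inv_rev, hG'', hPinv, hQinv,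
    fromBlocks_multiply, fromBlocks_multiply, toBlocks_fromBlocks₁₁]
  simp only [Matrix.one_mul, Matrix.mul_one, Matrix.mul_zero, Matrix.zero_mul, add_zero, zero_add,
    Matrix.neg_mul, Matrix.mul_neg, neg_neg]
  -- match with the stated right-hand side
  rw [transpose_fromCols, transpose_neg, transpose_mul, hB11invsymm, transpose_zero]
  simp only [mul_fromCols, Matrix.mul_zero, ← fromCols_neg, fromRows_mul,
    Matrix.zero_mul, Matrix.neg_mul, Matrix.mul_neg, neg_neg]
  have e1 : fromCols (-(B11⁻¹ * B21ᵀ)) (0 : Matrix (Fin a) (Fin c) ℝ) =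
      -(fromCols (B11⁻¹ * B21ᵀ) (0 : Matrix (Fin a) (Fin c) ℝ)) := by
    rw [fromCols_neg, neg_zero]
  have e2 : fromRows (-(B21ᵀᵀ * B11⁻¹)) (0 : Matrix (Fin c) (Fin a) ℝ) =
      -(fromRows (B21 * B11⁻¹) (0 : Matrix (Fin c) (Fin a) ℝ)) := by
    rw [fromRows_neg, neg_zero, transpose_transpose]
  have e3 : fromRows (B21 * B11⁻¹) (0 : Matrix (Fin c) (Fin a) ℝ) =
      fromRows B21 (0 : Matrix (Fin c) (Fin a) ℝ) * B11⁻¹ := by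
    rw [fromRows_mul, Matrix.zero_mul]
  rw [e1, e2]
  simp only [Matrix.neg_mul, Matrix.mul_neg, neg_neg, neg_zero, add_zero]
  rw [e3]
  simp only [Matrix.mul_assoc]
end

section
/- Let A be a real symmetric invertible matrix in 3×3 block form A = [[A_p̌p̌, A_p̂p̌ᵀ, A_qp̌ᵀ], [A_p̂p̌, A_p̂p̂, A_qp̂ᵀ], [A_qp̌, A_qp̂, A_qq]], suppose there is a real |p̂|×|p̌| matrix T_p with A_qp̌ = A_qp̂ T_p, and set B_p̌p̌ = A_p̌p̌ − T_pᵀ A_p̂p̌ − A_p̂p̌ᵀ T_p + T_pᵀ A_p̂p̂ T_p and B_p̂p̌ = A_p̂p̌ − A_p̂p̂ T_p. Assume B_p̌p̌ is invertible, let Ā₁ = [[A_p̂p̂ − B_p̂p̌ B_p̌p̌⁻¹ B_p̂p̌ᵀ, A_qp̂ᵀ], [A_qp̂, A_qq]], assume Ā₁ is invertible, let Ḡ₁ = Ā₁⁻¹, and let G₁ denote the submatrix of G = A⁻¹ with rows and columns indexed by p̂ ∪ q. Then G₁ = [[T_p B_p̌p̌⁻¹ T_pᵀ, 0], [0, 0]]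 + [[T_p B_p̌p̌⁻¹ B_p̂p̌ᵀ + I, 0], [0, I]] · Ḡ₁ · [[B_p̂p̌ B_p̌p̌⁻¹ T_pᵀ + I, 0], [0, I]], where all 2×2 block matrices have diagonal blocks of sizes |p̂| and |q|. -/
open Matrix

lemma mySub22 {m₁ m₂ : Type*} (X : Matrix m₁ m₁ ℝ) (Y : Matrix m₁ m₂ ℝ) (Z : Matrix m₂ m₁ ℝ)
    (W : Matrix m₂ m₂ ℝ) : (fromBlocks X Y Z W).submatrix Sum.inr Sum.inr = W := by
  ext i j; simp [fromBlocks]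

lemma myColAdd {m n₁ n₂ : Type*} (A₁ B₁ : Matrix m n₁ ℝ) (A₂ B₂ : Matrix m n₂ ℝ) :
    fromCols A₁ A₂ + fromCols B₁ B₂ = fromCols (A₁ + B₁) (A₂ + B₂) := by
  ext i (j|j) <;> rfl

lemma myRowAdd {n m₁ m₂ : Type*} (A₁ B₁ : Matrix m₁ n ℝ) (A₂ B₂ : Matrix m₂ n ℝ) :
    fromRows A₁ A₂ + fromRows B₁ B₂ = fromRows (A₁ + B₁) (A₂ + B₂) := by
  ext (i|i) j <;> rfl

/-- Block inversion with skeletonization: with the notation of Lemma 4, the submatrix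
`G₁ = G(p̂∪q, p̂∪q)` of `G = A⁻¹` satisfies
`G₁ = [[T_p B⁻¹ T_pᵀ, 0],[0,0]] + [[T_p B⁻¹ B_p̂p̌ᵀ + I, 0],[0, I]] Ḡ₁ [[B_p̂p̌ B⁻¹ T_pᵀ + I, 0],[0, I]]`. -/
theorem stmt_7 (a b c : ℕ)
    (A11 : Matrix (Fin a) (Fin a) ℝ)
    (A21 : Matrix (Fin b) (Fin a) ℝ)
    (A22 : Matrix (Fin b) (Fin b) ℝ)
    (A31 : Matrix (Fin c) (Fin a) ℝ)
    (A32 : Matrix (Fin c) (Fin b) ℝ)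
    (A33 : Matrix (Fin c) (Fin c) ℝ)
    (A : Matrix ((Fin a ⊕ Fin b) ⊕ Fin c) ((Fin a ⊕ Fin b) ⊕ Fin c) ℝ)
    (hA : A = fromBlocks (fromBlocks A11 A21ᵀ A21 A22) (fromRows A31ᵀ A32ᵀ)
        (fromCols A31 A32) A33)
    (hsymm : A.IsSymm) (hAunit : IsUnit A)
    (Tp : Matrix (Fin b) (Fin a) ℝ)
    (hTp : A31 = A32 * Tp)
    (B11 : Matrix (Fin a) (Fin a) ℝ)
    (hB11 : B11 = A11 - Tpᵀ * A21 - A21ᵀ * Tp + Tpᵀ * A22 * Tp)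
    (B21 : Matrix (Fin b) (Fin a) ℝ)
    (hB21 : B21 = A21 - A22 * Tp)
    (hB11unit : IsUnit B11)
    (Abar₁ : Matrix (Fin b ⊕ Fin c) (Fin b ⊕ Fin c) ℝ)
    (hAbar₁ : Abar₁ = fromBlocks (A22 - B21 * B11⁻¹ * B21ᵀ) A32ᵀ A32 A33)
    (hAbar₁unit : IsUnit Abar₁)
    (Gbar₁ : Matrix (Fin b ⊕ Fin c) (Fin b ⊕ Fin c) ℝ)
    (hGbar₁ : Gbar₁ = Abar₁⁻¹)
    (G₁ : Matrix (Fin b ⊕ Fin c) (Fin b ⊕ Fin c) ℝ)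
    (hG₁ : G₁ = (A⁻¹).submatrix (Sum.elim (Sum.inl ∘ Sum.inr) Sum.inr)
        (Sum.elim (Sum.inl ∘ Sum.inr) Sum.inr)) :
    G₁ = fromBlocks (Tp * B11⁻¹ * Tpᵀ) 0 0 (0 : Matrix (Fin c) (Fin c) ℝ) +
        fromBlocks (Tp * B11⁻¹ * B21ᵀ + 1) 0 0 (1 : Matrix (Fin c) (Fin c) ℝ) * Gbar₁ *
          fromBlocks (B21 * B11⁻¹ * Tpᵀ + 1) 0 0 (1 : Matrix (Fin c) (Fin c) ℝ) := by
  classical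
  letI iB : Invertible B11 := hB11unit.invertible
  letI iS0 : Invertible Abar₁ := hAbar₁unit.invertible
  have hA22 : A22ᵀ = A22 := by
    ext i j
    have h := congrFun (congrFun hsymm (Sum.inl (Sum.inr i))) (Sum.inl (Sum.inr j))
    simpa [hA] using h
  set U : Matrix (Fin b ⊕ Fin c) (Fin a) ℝ := fromRows Tp 0 with hU
  set D : Matrix (Fin b ⊕ Fin c) (Fin a) ℝ := fromRows B21 0 with hD
  set Dt : Matrix (Fin a) (Fin b ⊕ Fin c) ℝ := fromCols B21ᵀ 0 with hDt
  set E : Matrix (Fin b ⊕ Fin c) (Fin b ⊕ Fin c) ℝ := fromBlocks A22 A32ᵀ A32 A33 with hE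
  have hS : E - D * ⅟B11 * Dt = Abar₁ := by
    rw [invOf_eq_nonsing_inv, hAbar₁, hD, hDt, hE, fromRows_mul, fromRows_mul_fromCols]
    simp only [Matrix.zero_mul, Matrix.mul_zero]
    rw [sub_eq_add_neg, fromBlocks_neg, fromBlocks_add]
    simp [sub_eq_add_neg]
  letI iS : Invertible (E - D * ⅟B11 * Dt) := iS0.copy _ hS
  letI iAt : Invertible (fromBlocks B11 Dt D E) := fromBlocks₁₁Invertible B11 Dt D E
  have hGeq : ⅟(E - D * ⅟B11 * Dt) = Gbar₁ := by
    rw [invOf_eq_nonsing_inv, hS, hGbar₁]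
  have hAt : ⅟(fromBlocks B11 Dt D E) =
      fromBlocks (⅟B11 + ⅟B11 * Dt * Gbar₁ * D * ⅟B11) (-(⅟B11 * Dt * Gbar₁))
        (-(Gbar₁ * D * ⅟B11)) Gbar₁ := by
    rw [invOf_fromBlocks₁₁_eq, hGeq]
  set Li : Matrix (Fin a ⊕ (Fin b ⊕ Fin c)) (Fin a ⊕ (Fin b ⊕ Fin c)) ℝ :=
    fromBlocks 1 0 U 1 with hLi
  set L : Matrix (Fin a ⊕ (Fin b ⊕ Fin c)) (Fin a ⊕ (Fin b ⊕ Fin c)) ℝ :=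
    fromBlocks 1 0 (-U) 1 with hL
  have hLLi : L * Li = 1 := by
    rw [hL, hLi, fromBlocks_multiply, ← fromBlocks_one]
    congr 1 <;> simp
  have hLiL : Li * L = 1 := by
    rw [hL, hLi, fromBlocks_multiply, ← fromBlocks_one]
    congr 1 <;> simp
  set A' : Matrix (Fin a ⊕ (Fin b ⊕ Fin c)) (Fin a ⊕ (Fin b ⊕ Fin c)) ℝ :=
    fromBlocks A11 (fromCols A21ᵀ A31ᵀ) (fromRows A21 A31) E with hA'
  have h2 : Dt + Uᵀ * E = fromCols A21ᵀ A31ᵀ := by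
    rw [hU, hDt, hE, transpose_fromRows, transpose_zero, fromCols_mul_fromBlocks, myColAdd,
      fromCols_ext_iff]
    constructor
    · rw [hB21, transpose_sub, transpose_mul, hA22]
      simp
    · rw [hTp, transpose_mul]
      simp
  have h3 : D + E * U = fromRows A21 A31 := by
    rw [hU, hD, hE, fromBlocks_mul_fromRows, myRowAdd, fromRows_ext_iff]
    constructor
    · rw [hB21]; simp
    · rw [hTp]; simp
  have h1 : B11 + Uᵀ * D + fromCols A21ᵀ A31ᵀ * U = A11 := by
    rw [hU, hD, transpose_fromRows, transpose_zero, fromCols_mul_fromRows,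
      fromCols_mul_fromRows, hB11, hB21]
    simp only [Matrix.zero_mul, Matrix.mul_zero, add_zero, Matrix.mul_sub, Matrix.mul_assoc]
    abel
  have hA'eq : A' = Liᵀ * fromBlocks B11 Dt D E * Li := by
    rw [hA', hLi, fromBlocks_transpose, fromBlocks_multiply, fromBlocks_multiply]
    simp only [transpose_one, transpose_zero, Matrix.one_mul, Matrix.mul_one, Matrix.zero_mul,
      Matrix.mul_zero, add_zero, zero_add]
    rw [h2, h3]
    rw [← h1]
  -- A * candidate = 1
  have hA'L : A' * (L * ⅟(fromBlocks B11 Dt D E) * Lᵀ) = 1 := by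
    rw [hA'eq]
    simp only [Matrix.mul_assoc]
    rw [← Matrix.mul_assoc Li L, hLiL, Matrix.one_mul,
      ← Matrix.mul_assoc (fromBlocks B11 Dt D E) (⅟(fromBlocks B11 Dt D E)) Lᵀ,
      mul_invOf_self, Matrix.one_mul, ← Matrix.transpose_mul, hLLi, Matrix.transpose_one]
  have hAsub : A = A'.submatrix (Equiv.sumAssoc (Fin a) (Fin b) (Fin c))
      (Equiv.sumAssoc (Fin a) (Fin b) (Fin c)) := by
    ext i j
    rcases i with (i | i) | i <;> rcases j with (j | j) | j <;>
      simp [hA, hA', hE, fromBlocks, fromRows_apply_inl, fromRows_apply_inr, fromCols_apply_inl,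
        fromCols_apply_inr]
  have hAinv : A⁻¹ = (L * ⅟(fromBlocks B11 Dt D E) * Lᵀ).submatrix
      (Equiv.sumAssoc (Fin a) (Fin b) (Fin c)) (Equiv.sumAssoc (Fin a) (Fin b) (Fin c)) := by
    apply inv_eq_right_inv
    rw [hAsub, submatrix_mul_equiv, hA'L, submatrix_one_equiv]
  have hcomp : ⇑(Equiv.sumAssoc (Fin a) (Fin b) (Fin c)) ∘
      (Sum.elim (Sum.inl ∘ Sum.inr) Sum.inr : Fin b ⊕ Fin c → (Fin a ⊕ Fin b) ⊕ Fin c)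
      = Sum.inr := by
    funext x; rcases x with x | x <;> rfl
  rw [hG₁, hAinv, submatrix_submatrix, hcomp, hAt, hL, fromBlocks_transpose, transpose_neg,
    transpose_one, transpose_zero, fromBlocks_multiply, fromBlocks_multiply, mySub22]
  have hBinv : (⅟B11 : Matrix (Fin a) (Fin a) ℝ) = B11⁻¹ := invOf_eq_nonsing_inv B11
  have hF : U * B11⁻¹ * Uᵀ = fromBlocks (Tp * B11⁻¹ * Tpᵀ) 0 0 (0 : Matrix (Fin c) (Fin c) ℝ) := by
    rw [hU, transpose_fromRows, transpose_zero, fromRows_mul, fromRows_mul_fromCols]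
    simp
  have hK : fromBlocks (Tp * B11⁻¹ * B21ᵀ + 1) 0 0 (1 : Matrix (Fin c) (Fin c) ℝ)
      = U * B11⁻¹ * Dt + 1 := by
    rw [hU, hDt, fromRows_mul, fromRows_mul_fromCols, ← fromBlocks_one, fromBlocks_add]
    simp
  have hK' : fromBlocks (B21 * B11⁻¹ * Tpᵀ + 1) 0 0 (1 : Matrix (Fin c) (Fin c) ℝ)
      = D * B11⁻¹ * Uᵀ + 1 := by
    rw [hU, hD, transpose_fromRows, transpose_zero, fromRows_mul, fromRows_mul_fromCols,
      ← fromBlocks_one, fromBlocks_add]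
    simp
  rw [← hF, hK, hK', hBinv]
  simp only [Matrix.mul_add, Matrix.add_mul, Matrix.mul_one, Matrix.one_mul, Matrix.neg_mul,
    Matrix.mul_neg, neg_neg, Matrix.transpose_one, Matrix.mul_assoc]
  abel
end

section
/- Let A be a real symmetric invertible matrix in 3×3 block form A = [[A_p̌p̌, A_p̂p̌ᵀ, A_qp̌ᵀ], [A_p̂p̌, A_p̂p̂, A_qp̂ᵀ], [A_qp̌, A_qp̂, A_qq]], suppose there is a real |p̂|×|p̌| matrix T_p with A_qp̌ = A_qp̂ T_p, and set B_p̌p̌ = A_p̌p̌ − T_pᵀ A_p̂p̌ − A_p̂p̌ᵀ T_p + T_pᵀ A_p̂p̂ T_p and B_p̂p̌ = A_p̂p̌ − A_p̂p̂ T_p. Assume B_p̌p̌ is invertible, let Ā₁ = [[A_p̂p̂ − B_p̂p̌ B_p̌p̌⁻¹ B_p̂p̌ᵀ, A_qp̂ᵀ], [A_qp̂, A_qq]], assume Ā₁ is invertible, let Ḡ₁ = Ā₁⁻¹, and let G = A⁻¹. Then G_p̌p̌ depends only on the (p̂, p̂) diagonal block of Ḡ₁; explicitly, G_p̌p̌ =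 B_p̌p̌⁻¹ + (B_p̌p̌⁻¹B_p̂p̌ᵀ) (Ḡ₁)_p̂p̂ (B_p̂p̌ B_p̌p̌⁻¹). -/
open Matrix

/-- Block inversion with skeletonization, locality form: `G_p̌p̌` depends only on the
`(p̂, p̂)` diagonal block of `Ḡ₁`:
`G_p̌p̌ = B_p̌p̌⁻¹ + (B_p̌p̌⁻¹B_p̂p̌ᵀ) (Ḡ₁)_p̂p̂ (B_p̂p̌ B_p̌p̌⁻¹)`. -/
theorem stmt_12 (a b c : ℕ)
    (A11 : Matrix (Fin a) (Fin a) ℝ)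
    (A21 : Matrix (Fin b) (Fin a) ℝ)
    (A22 : Matrix (Fin b) (Fin b) ℝ)
    (A31 : Matrix (Fin c) (Fin a) ℝ)
    (A32 : Matrix (Fin c) (Fin b) ℝ)
    (A33 : Matrix (Fin c) (Fin c) ℝ)
    (A : Matrix ((Fin a ⊕ Fin b) ⊕ Fin c) ((Fin a ⊕ Fin b) ⊕ Fin c) ℝ)
    (hA : A = fromBlocks (fromBlocks A11 A21ᵀ A21 A22) (fromRows A31ᵀ A32ᵀ)
        (fromCols A31 A32) A33)
    (hsymm : A.IsSymm) (hAunit : IsUnit A)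
    (Tp : Matrix (Fin b) (Fin a) ℝ)
    (hTp : A31 = A32 * Tp)
    (B11 : Matrix (Fin a) (Fin a) ℝ)
    (hB11 : B11 = A11 - Tpᵀ * A21 - A21ᵀ * Tp + Tpᵀ * A22 * Tp)
    (B21 : Matrix (Fin b) (Fin a) ℝ)
    (hB21 : B21 = A21 - A22 * Tp)
    (hB11unit : IsUnit B11)
    (Abar₁ : Matrix (Fin b ⊕ Fin c) (Fin b ⊕ Fin c) ℝ)
    (hAbar₁ : Abar₁ = fromBlocks (A22 - B21 * B11⁻¹ * B21ᵀ) A32ᵀ A32 A33)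
    (hAbar₁unit : IsUnit Abar₁)
    (Gbar₁ : Matrix (Fin b ⊕ Fin c) (Fin b ⊕ Fin c) ℝ)
    (hGbar₁ : Gbar₁ = Abar₁⁻¹) :
    ((A⁻¹).toBlocks₁₁).toBlocks₁₁ =
      B11⁻¹ + (B11⁻¹ * B21ᵀ) * Gbar₁.toBlocks₁₁ * (B21 * B11⁻¹) := by
  -- invertibility facts
  have hB1 : B11 * B11⁻¹ = 1 := mul_nonsing_inv _ ((isUnit_iff_isUnit_det _).mp hB11unit)
  have hS1 : Abar₁ * Abar₁⁻¹ = 1 := mul_nonsing_inv _ ((isUnit_iff_isUnit_det _).mp hAbar₁unit)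
  -- symmetry of A22
  have h22 : A22ᵀ = A22 := by
    ext i j
    have h := congrFun (congrFun hsymm (Sum.inl (Sum.inr i))) (Sum.inl (Sum.inr j))
    simpa [hA] using h
  -- notation
  set N : Matrix (Fin a ⊕ Fin b) (Fin a ⊕ Fin b) ℝ := fromBlocks 1 (-Tpᵀ) 0 1 with hN
  set M : Matrix ((Fin a ⊕ Fin b) ⊕ Fin c) ((Fin a ⊕ Fin b) ⊕ Fin c) ℝ :=
    fromBlocks N 0 0 1 with hM
  set M' : Matrix ((Fin a ⊕ Fin b) ⊕ Fin c) ((Fin a ⊕ Fin b) ⊕ Fin c) ℝ :=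
    fromBlocks (fromBlocks 1 Tpᵀ 0 1) 0 0 1 with hM'
  set Cr : Matrix (Fin b ⊕ Fin c) (Fin a) ℝ := fromRows B21 0 with hCr
  set Bc : Matrix (Fin a) (Fin b ⊕ Fin c) ℝ := fromCols B21ᵀ 0 with hBc
  set X : Matrix (Fin a ⊕ (Fin b ⊕ Fin c)) (Fin a ⊕ (Fin b ⊕ Fin c)) ℝ :=
    fromBlocks (B11⁻¹ + B11⁻¹ * Bc * Abar₁⁻¹ * Cr * B11⁻¹) (-(B11⁻¹ * Bc * Abar₁⁻¹))
      (-(Abar₁⁻¹ * Cr * B11⁻¹)) Abar₁⁻¹ with hX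
  set f := Equiv.sumAssoc (Fin a) (Fin b) (Fin c) with hf
  -- M' is a left inverse of M
  have hM'M : M' * M = 1 := by
    rw [hM, hM', hN]
    simp [fromBlocks_multiply, ← fromBlocks_one]
  -- the (2,2) block of the transformed matrix decomposes via the Schur complement
  have hD : fromBlocks A22 A32ᵀ A32 A33 = Abar₁ + Cr * B11⁻¹ * Bc := by
    rw [hCr, hBc, fromRows_mul, Matrix.zero_mul, fromRows_mul_fromCols, hAbar₁,
      fromBlocks_add]
    simp [Matrix.mul_assoc]
  -- right inverse of the reassembled matrix, via the Schur complement formula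
  have hAX : fromBlocks B11 Bc Cr (fromBlocks A22 A32ᵀ A32 A33) * X = 1 := by
    rw [hD, hX, fromBlocks_multiply, ← fromBlocks_one, fromBlocks_inj]
    refine ⟨?_, ?_, ?_, ?_⟩ <;>
      simp only [Matrix.mul_add, Matrix.add_mul, Matrix.mul_neg, Matrix.neg_mul,
        ← Matrix.mul_assoc, hB1, hS1, Matrix.one_mul] <;>
      abel
  -- the congruence transformation zeroes out the (3,1) block
  have hMAM : M * A * Mᵀ =
      (fromBlocks B11 Bc Cr (fromBlocks A22 A32ᵀ A32 A33)).submatrix f f := by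
    have h1 : N * (fromBlocks A11 A21ᵀ A21 A22) * Nᵀ = fromBlocks B11 B21ᵀ B21 A22 := by
      rw [hN, hB11, hB21, fromBlocks_transpose, fromBlocks_multiply, fromBlocks_multiply,
        fromBlocks_inj]
      simp only [transpose_one, transpose_zero, transpose_neg, transpose_transpose,
        transpose_sub, transpose_mul, h22]
      refine ⟨?_, ?_, ?_, ?_⟩ <;>
        simp only [Matrix.mul_one, Matrix.one_mul, Matrix.mul_zero, Matrix.zero_mul,
          Matrix.neg_mul, Matrix.mul_neg, Matrix.sub_mul, Matrix.mul_sub, Matrix.add_mul,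
          Matrix.mul_add, neg_neg, zero_add, add_zero, ← Matrix.mul_assoc] <;>
        abel
    have h2 : N * fromRows A31ᵀ A32ᵀ = fromRows 0 A32ᵀ := by
      rw [hN, hTp, fromBlocks_mul_fromRows]
      simp
    have h3 : fromCols A31 A32 * Nᵀ = fromCols 0 A32 := by
      rw [hN, hTp, fromBlocks_transpose, fromCols_mul_fromBlocks]
      simp
    have h4 : M * A * Mᵀ = fromBlocks (fromBlocks B11 B21ᵀ B21 A22) (fromRows 0 A32ᵀ)
        (fromCols 0 A32) A33 := by
      rw [hA, hM, fromBlocks_transpose, transpose_one, transpose_zero, fromBlocks_multiply,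
        fromBlocks_multiply]
      rw [← h1, ← h2, ← h3]
      simp [Matrix.mul_assoc]
    rw [h4]
    ext i j
    rcases i with (i | i) | i <;> rcases j with (j | j) | j <;>
      simp only [hf, hCr, hBc, submatrix_apply, Equiv.sumAssoc_apply_inl_inl,
        Equiv.sumAssoc_apply_inl_inr, Equiv.sumAssoc_apply_inr, fromBlocks_apply₁₁,
        fromBlocks_apply₁₂, fromBlocks_apply₂₁, fromBlocks_apply₂₂, fromRows_apply_inl,
        fromRows_apply_inr, fromCols_apply_inl, fromCols_apply_inr]
  -- hence an explicit right inverse for A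
  have hY : A * (Mᵀ * X.submatrix f f * M) = 1 := by
    have h5 : M * A * Mᵀ * X.submatrix f f = 1 := by
      rw [hMAM, submatrix_mul_equiv, hAX, submatrix_one_equiv]
    have h6 : A * Mᵀ * X.submatrix f f = M' := by
      have h7 := congrArg (fun Z => M' * Z) h5
      simpa [← Matrix.mul_assoc, hM'M, Matrix.one_mul, Matrix.mul_one] using h7
    calc A * (Mᵀ * X.submatrix f f * M) = A * Mᵀ * X.submatrix f f * M := by
          simp only [← Matrix.mul_assoc]
      _ = M' * M := by rw [h6]
      _ = 1 := hM'M
  have hG : A⁻¹ = Mᵀ * X.submatrix f f * M := inv_eq_right_inv hY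
  -- extract the (1,1)-(1,1) block
  have hY11 : (Mᵀ * X.submatrix f f * M).toBlocks₁₁ = Nᵀ * (X.submatrix f f).toBlocks₁₁ * N := by
    conv_lhs => rw [← fromBlocks_toBlocks (X.submatrix f f)]
    rw [hM, fromBlocks_transpose, transpose_one, transpose_zero, fromBlocks_multiply,
      fromBlocks_multiply]
    simp
  have hK : (Nᵀ * (X.submatrix f f).toBlocks₁₁ * N).toBlocks₁₁ =
      ((X.submatrix f f).toBlocks₁₁).toBlocks₁₁ := by
    conv_lhs => rw [← fromBlocks_toBlocks ((X.submatrix f f).toBlocks₁₁)]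
    rw [hN, fromBlocks_transpose, fromBlocks_multiply, fromBlocks_multiply]
    simp
  have hsub : ((X.submatrix f f).toBlocks₁₁).toBlocks₁₁ = X.toBlocks₁₁ := by
    ext i j
    simp [toBlocks₁₁, hf, Equiv.sumAssoc]
  rw [hG, hY11, hK, hsub, hX, toBlocks_fromBlocks₁₁]
  -- finally rewrite the correction term through Gbar₁
  have hcorr : B11⁻¹ * Bc * Abar₁⁻¹ * Cr * B11⁻¹ =
      (B11⁻¹ * B21ᵀ) * Gbar₁.toBlocks₁₁ * (B21 * B11⁻¹) := by
    rw [hGbar₁, hBc, hCr]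
    conv_lhs => rw [← fromBlocks_toBlocks Abar₁⁻¹]
    rw [Matrix.mul_assoc B11⁻¹, fromCols_mul_fromBlocks]
    simp [fromCols_mul_fromRows, Matrix.mul_assoc]
  rw [hcorr]
end

section
/- Let A be a real symmetric matrix in 3×3 block form A = [[A_p̌p̌, A_p̂p̌ᵀ, A_qp̌ᵀ], [A_p̂p̌, A_p̂p̂, A_qp̂ᵀ], [A_qp̌, A_qp̂, A_qq]], suppose there is a real |p̂|×|p̌| matrix T_p with A_qp̌ = A_qp̂ T_p, and set B_p̌p̌ = A_p̌p̌ − T_pᵀ A_p̂p̌ − A_p̂p̌ᵀ T_p + T_pᵀ A_p̂p̂ T_p and B_p̂p̌ = A_p̂p̌ − A_p̂p̂ T_p. If A is invertible, B_p̌p̌ is invertible, and Ā₁ = [[A_p̂p̂ − B_p̂p̌ B_p̌p̌⁻¹ B_p̂p̌ᵀ, A_qp̂ᵀ], [A_qp̂, A_qq]], then Ā₁ is invertible. -/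
open Matrix

/-- If `A` is symmetric and invertible, `A_qp̌ = A_qp̂ T_p`, and `B_p̌p̌` is invertible,
then the skeletonized Schur complement
`Ā₁ = [[A_p̂p̂ - B_p̂p̌ B_p̌p̌⁻¹ B_p̂p̌ᵀ, A_qp̂ᵀ], [A_qp̂, A_qq]]` is invertible. -/
theorem stmt_13 (a b c : ℕ)
    (A11 : Matrix (Fin a) (Fin a) ℝ)
    (A21 : Matrix (Fin b) (Fin a) ℝ)
    (A22 : Matrix (Fin b) (Fin b) ℝ)
    (A31 : Matrix (Fin c) (Fin a) ℝ)
    (A32 : Matrix (Fin c) (Fin b) ℝ)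
    (A33 : Matrix (Fin c) (Fin c) ℝ)
    (A : Matrix ((Fin a ⊕ Fin b) ⊕ Fin c) ((Fin a ⊕ Fin b) ⊕ Fin c) ℝ)
    (hA : A = fromBlocks (fromBlocks A11 A21ᵀ A21 A22) (fromRows A31ᵀ A32ᵀ)
        (fromCols A31 A32) A33)
    (hsymm : A.IsSymm)
    (Tp : Matrix (Fin b) (Fin a) ℝ)
    (hTp : A31 = A32 * Tp)
    (B11 : Matrix (Fin a) (Fin a) ℝ)
    (hB11 : B11 = A11 - Tpᵀ * A21 - A21ᵀ * Tp + Tpᵀ * A22 * Tp)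
    (B21 : Matrix (Fin b) (Fin a) ℝ)
    (hB21 : B21 = A21 - A22 * Tp)
    (hAunit : IsUnit A) (hB11unit : IsUnit B11)
    (Abar₁ : Matrix (Fin b ⊕ Fin c) (Fin b ⊕ Fin c) ℝ)
    (hAbar₁ : Abar₁ = fromBlocks (A22 - B21 * B11⁻¹ * B21ᵀ) A32ᵀ A32 A33) :
    IsUnit Abar₁ := by
  have hB11inv : Invertible B11 := hB11unit.invertible
  set Q0 : Matrix (Fin a ⊕ Fin b) (Fin a ⊕ Fin b) ℝ := fromBlocks 1 0 (-Tp) 1 with hQ0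
  set Q : Matrix ((Fin a ⊕ Fin b) ⊕ Fin c) ((Fin a ⊕ Fin b) ⊕ Fin c) ℝ :=
    fromBlocks Q0 0 0 1 with hQ
  have hA31T : A31ᵀ = Tpᵀ * A32ᵀ := by rw [hTp, transpose_mul]
  have hAbig : Qᵀ * A * Q =
      fromBlocks (fromBlocks B11 B21ᵀ B21 A22) (fromRows 0 A32ᵀ) (fromCols 0 A32) A33 := by
    subst hA hB11 hB21
    have h22 : A22ᵀ = A22 := by
      ext i j
      have := Matrix.ext_iff.2 hsymm (Sum.inl (Sum.inr i)) (Sum.inl (Sum.inr j))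
      simpa using this
    simp only [hQ, hQ0, fromBlocks_transpose, transpose_one, transpose_zero, transpose_neg,
      fromBlocks_multiply, fromBlocks_mul_fromRows, fromCols_mul_fromBlocks,
      Matrix.mul_one, Matrix.one_mul, Matrix.mul_zero, Matrix.zero_mul, add_zero, zero_add,
      hA31T, hTp, transpose_mul, transpose_sub, transpose_add, transpose_transpose]
    simp only [h22]
    rw [Matrix.fromBlocks_inj, Matrix.fromBlocks_inj, Matrix.fromRows_ext_iff,
      Matrix.fromCols_ext_iff]
    refine ⟨⟨?_, ?_, ?_, rfl⟩, ⟨?_, rfl⟩, ⟨?_, rfl⟩, rfl⟩ <;>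
      · simp only [Matrix.add_mul, Matrix.mul_neg, Matrix.neg_mul, neg_neg, Matrix.mul_assoc]
        abel
  set e := Equiv.sumAssoc (Fin a) (Fin b) (Fin c) with he
  set N : Matrix (Fin a ⊕ (Fin b ⊕ Fin c)) (Fin a ⊕ (Fin b ⊕ Fin c)) ℝ :=
    fromBlocks B11 (fromCols B21ᵀ 0) (fromRows B21 0) (fromBlocks A22 A32ᵀ A32 A33) with hN
  have hsub : Qᵀ * A * Q = N.submatrix e e := by
    rw [hAbig]
    ext i j
    rcases i with (i | i) | i <;> rcases j with (j | j) | j <;>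
      simp [hN, he, Equiv.sumAssoc, fromBlocks, submatrix]
  have hdetQ : Q.det = 1 := by
    rw [hQ, det_fromBlocks_zero₂₁, hQ0, det_fromBlocks_zero₁₂]
    simp
  have hdetN : N.det = B11.det * Abar₁.det := by
    rw [hN, det_fromBlocks₁₁, invOf_eq_nonsing_inv]
    congr 2
    rw [hAbar₁, fromRows_mul, Matrix.zero_mul, fromRows_mul_fromCols]
    rw [sub_eq_add_neg, fromBlocks_neg, fromBlocks_add]
    simp [sub_eq_add_neg]
  have hdetA : A.det = B11.det * Abar₁.det := by
    have := congrArg Matrix.det hsub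
    rwa [det_mul, det_mul, det_transpose, hdetQ, mul_one, one_mul,
      det_submatrix_equiv_self, hdetN] at this
  have hAdet : A.det ≠ 0 := by
    have := hAunit.map Matrix.detMonoidHom
    simpa [Matrix.detMonoidHom, isUnit_iff_ne_zero] using this
  rw [Matrix.isUnit_iff_isUnit_det, isUnit_iff_ne_zero]
  intro h
  rw [hdetA, h, mul_zero] at hAdet
  exact hAdet rfl
end
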